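/- Let M be a matroid on the ground set {1,…,n} with nonempty collection of bases B. Define A_U = { Σ_{j∉T} e_j : T ∈ B } ⊂ ℕⁿ, A¹ = { e_k + Σ_{j∉T} e_j : T ∈ B, k ∈ T }, and A² = { 2e_q + Σ_{j∈{1,…,n}∖(T∪{q})} e_j : T ∈ B, q ∉ T }. Then the convex hull of A¹ ∪ A² equals the Minkowski sum of the convex hull of A_U and the simplex conv({e₁,…,e_n}): conv(A¹ ∪ A²) = conv(A_U) + conv({e₁,…,e_n}). -/

import Mathlib

open Pointwise in
/-- For a matroid `M` on `{1,…,n}` with bases `B`, the convex hull of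
`A¹ ∪ A² = {e_k + Σ_{j∉T} e_j : T ∈ B, k ∈ T} ∪ {2e_q + Σ_{j∉T∪{q}} e_j : T ∈ B, q ∉ T}`
is the Minkowski sum of the convex hull of `A_U = {Σ_{j∉T} e_j : T ∈ B}` and the
standard simplex `conv {e₁,…,e_n}`. -/
theorem newton_polytope_minkowski (n : ℕ) (M : Matroid (Fin n))
    (hE : M.E = Set.univ) (hB : ∃ T, M.IsBase T) :
    convexHull ℝ
      ({v : Fin n → ℝ | ∃ T k, M.IsBase T ∧ k ∈ T ∧
          v = Set.indicator Tᶜ (fun _ => (1 : ℝ)) + Pi.single k 1} ∪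
       {v : Fin n → ℝ | ∃ T q, M.IsBase T ∧ q ∉ T ∧
          v = Set.indicator (T ∪ {q})ᶜ (fun _ => (1 : ℝ)) + Pi.single q 2})
    = convexHull ℝ {v : Fin n → ℝ | ∃ T, M.IsBase T ∧
          v = Set.indicator Tᶜ (fun _ => (1 : ℝ))}
      + convexHull ℝ {v : Fin n → ℝ | ∃ i, v = Pi.single i 1} := by
  rw [← convexHull_add]
  congr 1
  have key : ∀ (T : Set (Fin n)) (q : Fin n), q ∉ T →
      Set.indicator (T ∪ {q})ᶜ (fun _ => (1 : ℝ)) + Pi.single q 2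
        = Set.indicator Tᶜ (fun _ => (1 : ℝ)) + Pi.single q 1 := by
    intro T q hq
    funext j
    by_cases hj : j = q
    · subst hj
      simp [Set.indicator_apply, hq]; norm_num
    · by_cases hT : j ∈ T <;>
        simp [Set.indicator_apply, Pi.single_apply, Set.mem_insert_iff, hj, hT]
  ext v
  constructor
  · rintro (⟨T, k, hT, hk, rfl⟩ | ⟨T, q, hT, hq, rfl⟩)
    · exact ⟨_, ⟨T, hT, rfl⟩, _, ⟨k, rfl⟩, rfl⟩
    · exact ⟨_, ⟨T, hT, rfl⟩, _, ⟨q, rfl⟩, (key T q hq).symm⟩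
  · rintro ⟨x, ⟨T, hT, rfl⟩, y, ⟨i, rfl⟩, rfl⟩
    by_cases hi : i ∈ T
    · exact Or.inl ⟨T, i, hT, hi, rfl⟩
    · exact Or.inr ⟨T, i, hT, hi, (key T i hi).symm⟩
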